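/- The presented group G₂ on generators x₁, x₂ with relators x₁x₂x₁x₂⁻¹x₁⁻¹x₂⁻¹ and x₂⁻²x₁x₂⁻¹x₁⁻¹x₂²x₁⁻¹x₂ is isomorphic to the presented group H on generators a, b with relators a²b⁻³ and ab⁻²ab⁻¹ab⁻¹a⁻¹b²a⁻¹b²a⁻¹ba⁻¹, via the substitution x₁ ↦ ab⁻¹, x₂ ↦ b²a⁻¹ (with inverse a = x₁x₂x₁, b = x₂x₁). -/

import Mathlib

/-- The relators of the presented group
`G₂ = ⟨x₁, x₂ | x₁x₂x₁x₂⁻¹x₁⁻¹x₂⁻¹, x₂⁻²x₁x₂⁻¹x₁⁻¹x₂²x₁⁻¹x₂⟩`. -/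
def relsG₂ : Set (FreeGroup (Fin 2)) :=
  letI x₁ := FreeGroup.of (0 : Fin 2)
  letI x₂ := FreeGroup.of (1 : Fin 2)
  {x₁ * x₂ * x₁ * x₂⁻¹ * x₁⁻¹ * x₂⁻¹,
   x₂⁻¹ * x₂⁻¹ * x₁ * x₂⁻¹ * x₁⁻¹ * x₂ * x₂ * x₁⁻¹ * x₂}

/-- The relators of the presented group
`H = ⟨a, b | a²b⁻³, ab⁻²ab⁻¹ab⁻¹a⁻¹b²a⁻¹b²a⁻¹ba⁻¹⟩`. -/
def relsH : Set (FreeGroup (Fin 2)) :=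
  letI a := FreeGroup.of (0 : Fin 2)
  letI b := FreeGroup.of (1 : Fin 2)
  {a * a * b⁻¹ * b⁻¹ * b⁻¹,
   a * b⁻¹ * b⁻¹ * a * b⁻¹ * a * b⁻¹ * a⁻¹ * b * b * a⁻¹ * b * b * a⁻¹ * b * a⁻¹}

lemma relOne {α : Type*} {rels : Set (FreeGroup α)} {r : FreeGroup α} (h : r ∈ rels) :
    PresentedGroup.mk rels r = 1 :=
  (QuotientGroup.eq_one_iff _).mpr (Subgroup.subset_normalClosure h)

namespace IsoAux

noncomputable section

abbrev A : PresentedGroup relsH := PresentedGroup.of 0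
abbrev B : PresentedGroup relsH := PresentedGroup.of 1
abbrev P : PresentedGroup relsG₂ := PresentedGroup.of 0
abbrev Q : PresentedGroup relsG₂ := PresentedGroup.of 1

lemma hH1 : A * A * B⁻¹ * B⁻¹ * B⁻¹ = 1 := by
  simpa [map_mul, map_inv, PresentedGroup.of] using relOne (rels := relsH) (Set.mem_insert _ _)

lemma hH2 : A * B⁻¹ * B⁻¹ * A * B⁻¹ * A * B⁻¹ * A⁻¹ * B * B * A⁻¹ * B * B * A⁻¹ * B * A⁻¹ = 1 := by
  simpa [map_mul, map_inv, PresentedGroup.of] using relOne (rels := relsH) (Set.mem_insert_of_mem _ rfl)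

lemma hG1 : P * Q * P * Q⁻¹ * P⁻¹ * Q⁻¹ = 1 := by
  simpa [map_mul, map_inv, PresentedGroup.of] using relOne (rels := relsG₂) (Set.mem_insert _ _)

lemma hG2 : Q⁻¹ * Q⁻¹ * P * Q⁻¹ * P⁻¹ * Q * Q * P⁻¹ * Q = 1 := by
  simpa [map_mul, map_inv, PresentedGroup.of] using relOne (rels := relsG₂) (Set.mem_insert_of_mem _ rfl)

/-- braid relation in G₂ -/
lemma hB : Q * P * Q = P * Q * P := by
  calc Q * P * Q = (P * Q * P * Q⁻¹ * P⁻¹ * Q⁻¹)⁻¹ * (P * Q * P) := by group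
  _ = P * Q * P := by rw [hG1]; group

lemma hA : P * Q⁻¹ * P⁻¹ = Q * P * Q⁻¹ * Q⁻¹ := by
  calc P * Q⁻¹ * P⁻¹
      = Q * Q * (Q⁻¹ * Q⁻¹ * P * Q⁻¹ * P⁻¹ * Q * Q * P⁻¹ * Q) * Q⁻¹ * P * Q⁻¹ * Q⁻¹ := by group
  _ = Q * P * Q⁻¹ * Q⁻¹ := by rw [hG2]; group

lemma hA' : P * Q * P⁻¹ = Q * Q * P⁻¹ * Q⁻¹ := by
  calc P * Q * P⁻¹ = (P * Q⁻¹ * P⁻¹)⁻¹ := by group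
  _ = (Q * P * Q⁻¹ * Q⁻¹)⁻¹ := by rw [hA]
  _ = Q * Q * P⁻¹ * Q⁻¹ := by simp [mul_inv_rev, mul_assoc]

lemma hQPPQ : Q * P * P * Q = P * P * P := by
  calc Q * P * P * Q = Q * P * (P * Q * P⁻¹) * P := by group
  _ = Q * P * (Q * Q * P⁻¹ * Q⁻¹) * P := by rw [hA']
  _ = (Q * P * Q) * (Q * P⁻¹ * Q⁻¹ * P) := by group
  _ = (P * Q * P) * (Q * P⁻¹ * Q⁻¹ * P) := by rw [hB]
  _ = P * (Q * P * Q) * (P⁻¹ * Q⁻¹ * P) := by group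
  _ = P * (P * Q * P) * (P⁻¹ * Q⁻¹ * P) := by rw [hB]
  _ = P * P * P := by group

lemma hP4 : Q * P * Q * P * Q = P * P * P * P := by
  calc Q * P * Q * P * Q = (Q * P * Q) * (P * Q) := by group
  _ = (P * Q * P) * (P * Q) := by rw [hB]
  _ = P * (Q * P * P * Q) := by group
  _ = P * (P * P * P) := by rw [hQPPQ]
  _ = P * P * P * P := by group

lemma hX : (P * Q * P)⁻¹ * (Q * P * Q * P) = P := by
  calc (P * Q * P)⁻¹ * (Q * P * Q * P) = (P * Q * P)⁻¹ * ((Q * P * Q) * P) := by group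
  _ = (P * Q * P)⁻¹ * ((P * Q * P) * P) := by rw [hB]
  _ = P := by group

/-- x₁ ↦ ab⁻¹, x₂ ↦ b²a⁻¹ respects the relators of G₂ -/
lemma liftG : ∀ r ∈ relsG₂,
    FreeGroup.lift ![A * B⁻¹, B * B * A⁻¹] r = 1 := by
  intro r hr
  simp only [relsG₂, Set.mem_insert_iff, Set.mem_singleton_iff] at hr
  rcases hr with rfl | rfl <;>
    simp only [map_mul, map_inv, FreeGroup.lift_apply_of, Matrix.cons_val_zero, Matrix.cons_val_one,
      Matrix.head_cons]
  · calc A * B⁻¹ * (B * B * A⁻¹) * (A * B⁻¹) * (B * B * A⁻¹)⁻¹ * (A * B⁻¹)⁻¹ * (B * B * A⁻¹)⁻¹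
        = A * A * B⁻¹ * B⁻¹ * B⁻¹ := by group
    _ = 1 := hH1
  · calc (B * B * A⁻¹)⁻¹ * (B * B * A⁻¹)⁻¹ * (A * B⁻¹) * (B * B * A⁻¹)⁻¹ * (A * B⁻¹)⁻¹ *
        (B * B * A⁻¹) * (B * B * A⁻¹) * (A * B⁻¹)⁻¹ * (B * B * A⁻¹)
        = A * B⁻¹ * B⁻¹ *
          (A * B⁻¹ * B⁻¹ * A * B⁻¹ * A * B⁻¹ * A⁻¹ * B * B * A⁻¹ * B * B * A⁻¹ * B * A⁻¹) *
          (B * B * A⁻¹) := by group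
    _ = 1 := by rw [hH2]; group

/-- a ↦ x₁x₂x₁, b ↦ x₂x₁ respects the relators of H -/
lemma liftH : ∀ r ∈ relsH,
    FreeGroup.lift ![P * Q * P, Q * P] r = 1 := by
  intro r hr
  simp only [relsH, Set.mem_insert_iff, Set.mem_singleton_iff] at hr
  rcases hr with rfl | rfl <;>
    simp only [map_mul, map_inv, FreeGroup.lift_apply_of, Matrix.cons_val_zero, Matrix.cons_val_one,
      Matrix.head_cons]
  · calc P * Q * P * (P * Q * P) * (Q * P)⁻¹ * (Q * P)⁻¹ * (Q * P)⁻¹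
        = P * Q * P * Q⁻¹ * P⁻¹ * Q⁻¹ := by group
    _ = 1 := hG1
  · calc P * Q * P * (Q * P)⁻¹ * (Q * P)⁻¹ * (P * Q * P) * (Q * P)⁻¹ * (P * Q * P) * (Q * P)⁻¹ *
        (P * Q * P)⁻¹ * (Q * P) * (Q * P) * (P * Q * P)⁻¹ * (Q * P) * (Q * P) * (P * Q * P)⁻¹ *
        (Q * P) * (P * Q * P)⁻¹
        = Q⁻¹ * P * P * ((P * Q * P)⁻¹ * (Q * P * Q * P)) * ((P * Q * P)⁻¹ * (Q * P * Q * P)) *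
          ((P * Q * P)⁻¹ * (Q * P * Q * P)) * (Q * P)⁻¹ * (P * Q * P)⁻¹ := by group
    _ = Q⁻¹ * (P * P * P * P) * (P * (Q * P)⁻¹ * (P * Q * P)⁻¹) := by rw [hX]; group
    _ = Q⁻¹ * (Q * P * Q * P * Q) * (P * (Q * P)⁻¹ * (P * Q * P)⁻¹) := by rw [hP4]
    _ = 1 := by group

/-- the homomorphism G₂ → H -/
def toH : PresentedGroup relsG₂ →* PresentedGroup relsH := PresentedGroup.toGroup liftG

/-- the homomorphism H → G₂ -/
def toG : PresentedGroup relsH →* PresentedGroup relsG₂ := PresentedGroup.toGroup liftH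

end

end IsoAux

/-- Change of generators `x₁ = ab⁻¹`, `x₂ = b²a⁻¹` (with inverse `a = x₁x₂x₁`,
`b = x₂x₁`): the presented group `G₂` is isomorphic to the presented group `H`. -/
theorem presentedGroupG₂_iso_presentedGroupH :
    ∃ e : PresentedGroup relsG₂ ≃* PresentedGroup relsH,
      e (PresentedGroup.of 0) =
        PresentedGroup.of 0 * (PresentedGroup.of 1)⁻¹ ∧
      e (PresentedGroup.of 1) =
        PresentedGroup.of 1 * PresentedGroup.of 1 * (PresentedGroup.of 0)⁻¹ ∧
      e.symm (PresentedGroup.of 0) =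
        PresentedGroup.of 0 * PresentedGroup.of 1 * PresentedGroup.of 0 ∧
      e.symm (PresentedGroup.of 1) =
        PresentedGroup.of 1 * PresentedGroup.of 0 := by
  classical
  have h₁ : IsoAux.toG.comp IsoAux.toH = MonoidHom.id _ := by
    ext i
    fin_cases i <;>
      simp [IsoAux.toG, IsoAux.toH, IsoAux.A, IsoAux.B, IsoAux.P, IsoAux.Q,
        PresentedGroup.toGroup.of, map_mul, map_inv] <;> group
  have h₂ : IsoAux.toH.comp IsoAux.toG = MonoidHom.id _ := by
    ext i
    fin_cases i <;>
      simp [IsoAux.toG, IsoAux.toH, IsoAux.A, IsoAux.B, IsoAux.P, IsoAux.Q,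
        PresentedGroup.toGroup.of, map_mul, map_inv] <;> group
  refine ⟨MonoidHom.toMulEquiv IsoAux.toH IsoAux.toG h₁ h₂, ?_, ?_, ?_, ?_⟩ <;>
    simp [MonoidHom.toMulEquiv, IsoAux.toG, IsoAux.toH, PresentedGroup.toGroup.of]
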